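/- If E_i ≥ 1/α for every i ∈ R, then R lies in C̄ with respect to the indicator error metric for FWER: for every A ⊆ [K] with A∩R ≠ ∅, E_A ≥ 1/α. Consequently, the set of all i such that E_A ≥ 1/α for every A containing i controls FWER: if E[E_i] ≤ 1 for i ∈ A*, then P(R ∩ A* ≠ ∅) ≤ α for this rejection set. -/

import Mathlib

open Finset MeasureTheory
open scoped Classical

/-- the e-Holm rejection set `R = {i : E_A ≥ 1/α for all A ∋ i}` lies in the
closed candidate set for the FWER indicator error metric: every `A` with `A ∩ R ≠ ∅` has
`E_A ≥ 1/α`. Consequently, if `E[E_i] ≤ 1` for `i ∈ A*`, then `P(R ∩ A* ≠ ∅) ≤ α`. -/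
theorem stmt8 {Ω : Type*} [MeasurableSpace Ω] (μ : Measure Ω) [IsProbabilityMeasure μ]
    (K : ℕ) (hK : 0 < K) (α : ℝ) (hα : 0 < α) (hα1 : α ≤ 1)
    (E : Fin K → Ω → ℝ) (hEnn : ∀ i ω, 0 ≤ E i ω)
    (hMeas : ∀ i, Measurable (E i))
    (Astar : Finset (Fin K))
    (hInt : ∀ i ∈ Astar, Integrable (E i) μ)
    (hEv : ∀ i ∈ Astar, ∫ ω, E i ω ∂μ ≤ 1)
    (R : Ω → Finset (Fin K))
    (hRdef : ∀ ω, R ω = univ.filter (fun i : Fin K => ∀ A : Finset (Fin K), i ∈ A →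
      (∑ j ∈ A, E j ω) / (A.card : ℝ) ≥ 1 / α)) :
    (∀ ω, ∀ A : Finset (Fin K), (A ∩ R ω).Nonempty →
      (∑ j ∈ A, E j ω) / (A.card : ℝ) ≥ 1 / α) ∧
    μ {ω | (R ω ∩ Astar).Nonempty} ≤ ENNReal.ofReal α := by
  have hmem : ∀ ω i, i ∈ R ω → ∀ A : Finset (Fin K), i ∈ A →
      (∑ j ∈ A, E j ω) / (A.card : ℝ) ≥ 1 / α := by
    intro ω i hi A hiA
    rw [hRdef ω, mem_filter] at hi
    exact hi.2 A hiA
  constructor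
  · rintro ω A ⟨i, hi⟩
    rw [mem_inter] at hi
    exact hmem ω i hi.2 A hi.1
  · rcases Astar.eq_empty_or_nonempty with h | h
    · simp [h, ENNReal.ofReal_pos.mpr hα, le_of_lt]
    · set n : ℝ := (Astar.card : ℝ) with hn
      have hnpos : 0 < n := by
        rw [hn]; exact_mod_cast Finset.card_pos.mpr h
      set S : Ω → ℝ := fun ω => ∑ j ∈ Astar, E j ω with hS
      have hSint : Integrable S μ := integrable_finset_sum _ hInt
      have hSnn : ∀ ω, 0 ≤ S ω := fun ω => Finset.sum_nonneg fun j _ => hEnn j ω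
      have hSint_le : ∫ ω, S ω ∂μ ≤ n := by
        rw [hS, integral_finset_sum _ hInt]
        calc ∑ j ∈ Astar, ∫ ω, E j ω ∂μ ≤ ∑ _j ∈ Astar, (1 : ℝ) :=
              Finset.sum_le_sum hEv
          _ = n := by simp [hn]
      have hsub : {ω | (R ω ∩ Astar).Nonempty} ⊆ {ω | n / α ≤ S ω} := by
        rintro ω ⟨i, hi⟩
        rw [mem_inter] at hi
        have := hmem ω i hi.1 Astar hi.2
        have h2 : 1 / α ≤ S ω / n := this
        rw [div_le_div_iff₀ hα hnpos] at h2
        rw [Set.mem_setOf_eq, div_le_iff₀ hα]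
        linarith
      have hmarkov := mul_meas_ge_le_integral_of_nonneg
        (ae_of_all μ hSnn) hSint (n / α)
      have hfin : μ {ω | (R ω ∩ Astar).Nonempty} ≠ ⊤ := measure_ne_top _ _
      have hle : μ {ω | (R ω ∩ Astar).Nonempty} ≤ μ {ω | n / α ≤ S ω} :=
        measure_mono hsub
      have htoReal : (μ {ω | n / α ≤ S ω}).toReal ≤ α := by
        have hcpos : 0 < n / α := div_pos hnpos hα
        have := le_trans hmarkov hSint_le
        rw [div_mul_eq_mul_div, div_le_iff₀ hα] at this
        simp only [Measure.real] at this
        nlinarith [ENNReal.toReal_nonneg (a := μ {ω | n / α ≤ S ω})]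
      calc μ {ω | (R ω ∩ Astar).Nonempty} ≤ μ {ω | n / α ≤ S ω} := hle
        _ = ENNReal.ofReal (μ {ω | n / α ≤ S ω}).toReal :=
            (ENNReal.ofReal_toReal (measure_ne_top _ _)).symm
        _ ≤ ENNReal.ofReal α := ENNReal.ofReal_le_ofReal htoReal
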